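/- Let I be an index set, R_i a commutative ring and M_i an R_i-module for each i ∈ I, and set R = ∏_i R_i, so that ⊕_i M_i and ∏_i M_i are R-modules. Let E ⊆ R be a multiplicative subset each of whose elements e = (e_i) satisfies e_i = 1 for all but finitely many i, and suppose each M_i is E-torsion free (for every e ∈ E and every i, multiplication by e_i on M_i is injective). Then the localization maps ⊕_i M_i → E^{-1}(⊕_i M_i) and ∏_i M_i → E^{-1}(∏_i M_i) are both injective, and the natural map E^{-1}(⊕_i M_i) → E^{-1}(∏_i M_i) induces an isomorphism of cokernels (E^{-1}⊕_i M_i)/(⊕_i M_i) ≅ (E^{-1}∏_i M_i)/(∏_i M_i); equivalently, the commutative square formed by ⊕_i M_i, E^{-1}⊕_i M_i, ∏_i M_i, E^{-1}∏_i M_i is a homology isomorphism in the vertical direction. -/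

import Mathlib

open scoped DirectSum

section

variable {ι : Type} [DecidableEq ι] (Rf : ι → Type) [∀ i, CommRing (Rf i)]
  (Mf : ι → Type) [∀ i, AddCommGroup (Mf i)] [∀ i, Module (Rf i) (Mf i)]

/-- Each `M i` is a module over the product ring `∏ i, R i` via the `i`-th projection. -/
noncomputable local instance moduleOfProj (i : ι) : Module (∀ j, Rf j) (Mf i) :=
  Module.compHom (Mf i) (Pi.evalRingHom Rf i)

/-- The canonical inclusion `⊕ᵢ Mᵢ →ₗ ∏ᵢ Mᵢ` of `∏ᵢ Rᵢ`-modules. -/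
noncomputable def sumToProd : (⨁ i : ι, Mf i) →ₗ[∀ j, Rf j] (∀ i, Mf i) :=
  DirectSum.toModule _ _ _ (fun i => LinearMap.single _ _ i)

/-- The map `E⁻¹(⊕ᵢ Mᵢ) →ₗ E⁻¹(∏ᵢ Mᵢ)` induced by the inclusion. -/
noncomputable def locSumToProd (E : Submonoid (∀ i, Rf i)) :
    LocalizedModule E (⨁ i : ι, Mf i) →ₗ[∀ j, Rf j] LocalizedModule E (∀ i, Mf i) :=
  IsLocalizedModule.map E (LocalizedModule.mkLinearMap E (⨁ i : ι, Mf i))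
    (LocalizedModule.mkLinearMap E (∀ i, Mf i)) (sumToProd Rf Mf)

namespace AdelicAux

variable {Rf Mf}

lemma sumToProd_apply (d : ⨁ i, Mf i) (i : ι) :
    sumToProd Rf Mf d i = d i := by
  induction d using DirectSum.induction_on with
  | zero => simp [sumToProd]
  | of j x =>
    rw [sumToProd, ← DirectSum.lof_eq_of (∀ j, Rf j)]
    erw [DirectSum.toModule_lof]
    rw [DirectSum.lof_eq_of]
    show Pi.single j x i = _
    rcases eq_or_ne j i with rfl | h
    · simp [DirectSum.of_eq_same]
    · simp [DirectSum.of_eq_of_ne _ _ _ (Ne.symm h), Pi.single_eq_of_ne (Ne.symm h), LinearMap.single]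
  | add a b ha hb => simp only [map_add, Pi.add_apply, DirectSum.add_apply, ha, hb]

omit [DecidableEq ι] in
lemma mk_injective {M : Type} [AddCommGroup M] [Module (∀ j, Rf j) M]
    (E : Submonoid (∀ i, Rf i))
    (h : ∀ e : E, Function.Injective (fun m : M => (e : ∀ j, Rf j) • m)) :
    Function.Injective (LocalizedModule.mkLinearMap E M) := by
  intro m m' hm
  rw [LocalizedModule.mkLinearMap_apply, LocalizedModule.mkLinearMap_apply,
    LocalizedModule.mk_eq] at hm
  obtain ⟨u, hu⟩ := hm
  rw [one_smul, one_smul] at hu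
  exact h u hu

omit [DecidableEq ι] in
lemma prod_smul_injective (E : Submonoid (∀ i, Rf i))
    (htf : ∀ e ∈ E, ∀ i, Function.Injective (fun m : Mf i => e i • m)) (e : E) :
    Function.Injective (fun m : ∀ i, Mf i => (e : ∀ j, Rf j) • m) := by
  intro m m' h
  funext i
  exact htf e e.2 i (congrFun h i)

omit [DecidableEq ι] in
lemma sum_smul_injective (E : Submonoid (∀ i, Rf i))
    (htf : ∀ e ∈ E, ∀ i, Function.Injective (fun m : Mf i => e i • m)) (e : E) :
    Function.Injective (fun d : ⨁ i, Mf i => (e : ∀ j, Rf j) • d) := by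
  intro d d' h
  refine DFunLike.ext _ _ fun i => ?_
  exact htf e e.2 i (congrArg (fun x : ⨁ i, Mf i => x i) h)

lemma locSumToProd_mk (E : Submonoid (∀ i, Rf i)) (d : ⨁ i, Mf i) (e : E) :
    locSumToProd Rf Mf E (LocalizedModule.mk d e) =
      LocalizedModule.mk (sumToProd Rf Mf d) e := by
  rw [IsLocalizedModule.mk_eq_mk', IsLocalizedModule.mk_eq_mk', locSumToProd,
    IsLocalizedModule.map_mk']

end AdelicAux

theorem adelic_sum_prod_localization
    (E : Submonoid (∀ i, Rf i))
    (hone : ∀ e ∈ E, {i | e i ≠ 1}.Finite)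
    (htf : ∀ e ∈ E, ∀ i, Function.Injective (fun m : Mf i => e i • m)) :
    Function.Injective (LocalizedModule.mkLinearMap E (⨁ i : ι, Mf i)) ∧
    Function.Injective (LocalizedModule.mkLinearMap E (∀ i, Mf i)) ∧
    Function.Bijective
      (Submodule.mapQ (LinearMap.range (LocalizedModule.mkLinearMap E (⨁ i : ι, Mf i)))
        (LinearMap.range (LocalizedModule.mkLinearMap E (∀ i, Mf i)))
        (locSumToProd Rf Mf E)
        (by
          intro x hx
          obtain ⟨m, rfl⟩ := hx
          exact ⟨sumToProd Rf Mf m,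
            (IsLocalizedModule.map_apply E (LocalizedModule.mkLinearMap E (⨁ i : ι, Mf i))
              (LocalizedModule.mkLinearMap E (∀ i, Mf i)) (sumToProd Rf Mf) m).symm⟩)) := by
  refine ⟨AdelicAux.mk_injective E (AdelicAux.sum_smul_injective E htf),
    AdelicAux.mk_injective E (AdelicAux.prod_smul_injective E htf), ?_, ?_⟩
  · -- injectivity of the induced map on cokernels
    have key : ∀ x : LocalizedModule E (⨁ i : ι, Mf i),
        locSumToProd Rf Mf E x ∈ LinearMap.range (LocalizedModule.mkLinearMap E (∀ i, Mf i)) →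
        x ∈ LinearMap.range (LocalizedModule.mkLinearMap E (⨁ i : ι, Mf i)) := by
      intro x
      induction x using LocalizedModule.induction_on with
      | h d e =>
        classical
        rintro ⟨p, hp⟩
        rw [LocalizedModule.mkLinearMap_apply, AdelicAux.locSumToProd_mk,
          LocalizedModule.mk_eq] at hp
        obtain ⟨u, hu⟩ := hp
        rw [one_smul] at hu
        have hu' : ∀ i, (u : ∀ j, Rf j) i • (e : ∀ j, Rf j) i • p i
            = (u : ∀ j, Rf j) i • sumToProd Rf Mf d i := fun i => congrFun hu i
        have hp0 : ∀ i, i ∉ d.support → p i = 0 := by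
          intro i hi
          have hd0 : d i = 0 := DFinsupp.notMem_support_iff.mp hi
          have h1 : ((u * e : E) : ∀ j, Rf j) i • p i
              = ((u * e : E) : ∀ j, Rf j) i • (0 : Mf i) := by
            have := hu' i
            rw [AdelicAux.sumToProd_apply, hd0, smul_zero, ← mul_smul] at this
            simpa [smul_zero] using this
          exact htf _ (u * e).2 i h1
        set q : ⨁ i, Mf i := DFinsupp.mk d.support (fun i => p i) with hq
        have hqp : ∀ i, q i = p i := by
          intro i
          rw [hq, DFinsupp.mk_apply]
          split
          · rfl
          · exact (hp0 i (by assumption)).symm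
        refine ⟨q, ?_⟩
        rw [LocalizedModule.mkLinearMap_apply]
        rw [LocalizedModule.mk_eq]
        refine ⟨u, ?_⟩
        rw [one_smul]
        refine DFunLike.ext _ _ fun i => ?_
        show (u : ∀ j, Rf j) i • ((e : ∀ j, Rf j) • q) i = (u : ∀ j, Rf j) i • d i
        show (u : ∀ j, Rf j) i • (e : ∀ j, Rf j) i • q i = (u : ∀ j, Rf j) i • d i
        rw [hqp i]
        have := hu' i
        rwa [AdelicAux.sumToProd_apply] at this
    intro a b hab
    obtain ⟨x, rfl⟩ := Submodule.Quotient.mk_surjective _ a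
    obtain ⟨y, rfl⟩ := Submodule.Quotient.mk_surjective _ b
    rw [Submodule.mapQ_apply, Submodule.mapQ_apply, Submodule.Quotient.eq] at hab
    rw [Submodule.Quotient.eq]
    exact key (x - y) (by rwa [map_sub])
  · -- surjectivity
    intro yq
    obtain ⟨y, rfl⟩ := Submodule.Quotient.mk_surjective _ yq
    induction y using LocalizedModule.induction_on with
    | h m e =>
      classical
      set d : ⨁ i, Mf i := DFinsupp.mk (hone e e.2).toFinset (fun i => m i) with hd
      set m₀ : ∀ i, Mf i := m - sumToProd Rf Mf d with hm₀
      have hzero : ∀ i, (e : ∀ j, Rf j) i ≠ 1 → m₀ i = 0 := by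
        intro i hi
        have : d i = m i := by
          rw [hd, DFinsupp.mk_apply, dif_pos (by simpa using hi)]
        simp [hm₀, AdelicAux.sumToProd_apply, this]
      have he_smul : (e : ∀ j, Rf j) • m₀ = m₀ := by
        funext i
        show (e : ∀ j, Rf j) i • m₀ i = m₀ i
        by_cases hi : (e : ∀ j, Rf j) i = 1
        · rw [hi, one_smul]
        · rw [hzero i hi, smul_zero]
      refine ⟨Submodule.Quotient.mk (LocalizedModule.mk d e), ?_⟩
      rw [Submodule.mapQ_apply, AdelicAux.locSumToProd_mk, Submodule.Quotient.eq]
      refine ⟨-m₀, ?_⟩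
      rw [LocalizedModule.mkLinearMap_apply]
      have h1 : LocalizedModule.mk m₀ (1 : E) = LocalizedModule.mk m₀ e := by
        have : LocalizedModule.mk m₀ e = LocalizedModule.mk m₀ (1 : E) := by
          conv_lhs => rw [← he_smul, ← Submonoid.smul_def]
          rw [LocalizedModule.mk_cancel]
        exact this.symm
      have h2 : LocalizedModule.mk (sumToProd Rf Mf d) e + LocalizedModule.mk m₀ e
          = LocalizedModule.mk m e := by
        rw [LocalizedModule.mk_add_mk]
        erw [← smul_add]
        have : sumToProd Rf Mf d + m₀ = m := by rw [hm₀]; abel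
        rw [this]
        erw [LocalizedModule.mk_cancel_common_left]
      have h3 : LocalizedModule.mk (-m₀) (1 : E) = - LocalizedModule.mk m₀ (1 : E) := by
        rw [← neg_one_smul (∀ j, Rf j) (LocalizedModule.mk m₀ (1 : E)),
          LocalizedModule.smul'_mk, neg_one_smul]
      rw [h3, h1, ← h2]
      abel

end
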